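/- Let P be a measure on ℤ such that ∑_n E(n) f_P(n) ≤ 1 for every e-value E for 𝒟₀. Let s, t : ℤ≥1 → ℤ satisfy s(n) ≥ n and t(n) ≤ −n for all n ≥ 1, and let u ∈ ℤ. Then f_P(u) + ∑_{n=1}^∞ ( f_P(s(n)) + f_P(t(n)) ) ≤ 1. -/

import Mathlib

open MeasureTheory ENNReal

/-- `𝒟₀`: 0-unimodal probability distributions on `ℤ`: probability measures `P` with
`f_P(n−1) ≤ f_P(n)` for all `n ≤ 0` and `f_P(n) ≥ f_P(n+1)` for all `n ≥ 0`. -/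
def UnimodalClass0 : Set (Measure ℤ) :=
  {P | IsProbabilityMeasure P ∧ (∀ n : ℤ, n ≤ 0 → P {n - 1} ≤ P {n}) ∧
    (∀ n : ℤ, 0 ≤ n → P {n + 1} ≤ P {n})}

/-- An e-value for `𝒟₀`: a function `E : ℤ → [0,∞)` with `∑ₙ E(n) f_P(n) ≤ 1` for
every `P ∈ 𝒟₀`. -/
def IsEValueD0 (E : ℤ → NNReal) : Prop :=
  ∀ P ∈ UnimodalClass0, ∑' n : ℤ, (E n : ℝ≥0∞) * P {n} ≤ 1

noncomputable def Fval (s t : ℕ → ℤ) (u : ℤ) (m : ℤ) : ℝ≥0∞ :=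
  (if m = u then 1 else 0) +
    ∑' n : ℕ, ((if m = s (n + 1) then 1 else 0) + (if m = t (n + 1) then 1 else 0))

lemma ind_mul_tsum (g : ℤ → ℝ≥0∞) (c : ℤ) :
    ∑' m : ℤ, (if m = c then (1 : ℝ≥0∞) else 0) * g m = g c := by
  rw [tsum_eq_single c]
  · simp
  · intro b hb; simp [hb]

lemma count_mul_tsum (g : ℤ → ℝ≥0∞) (v : ℕ → ℤ) :
    ∑' a : ℤ, (∑' n : ℕ, if a = v n then (1 : ℝ≥0∞) else 0) * g a = ∑' n : ℕ, g (v n) := by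
  have h : ∀ a : ℤ, (∑' n : ℕ, if a = v n then (1 : ℝ≥0∞) else 0) * g a
      = ∑' n : ℕ, (if a = v n then (1 : ℝ≥0∞) else 0) * g a :=
    fun a => (ENNReal.tsum_mul_right).symm
  simp only [h]
  rw [ENNReal.tsum_comm]
  congr 1
  ext n
  exact ind_mul_tsum g (v n)

lemma Fval_key (s t : ℕ → ℤ) (u : ℤ) (g : ℤ → ℝ≥0∞) :
    ∑' m : ℤ, Fval s t u m * g m
      = g u + ∑' n : ℕ, (g (s (n + 1)) + g (t (n + 1))) := by
  simp only [Fval, add_mul, ENNReal.tsum_add, ENNReal.tsum_mul_right]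
  rw [ind_mul_tsum]
  congr 1
  rw [count_mul_tsum g (fun n => s (n + 1)), count_mul_tsum g (fun n => t (n + 1))]

lemma Fval_ne_top (s t : ℕ → ℤ) (u : ℤ) (hs : ∀ n : ℕ, 1 ≤ n → (n : ℤ) ≤ s n)
    (ht : ∀ n : ℕ, 1 ≤ n → t n ≤ -(n : ℤ)) (m : ℤ) : Fval s t u m ≠ ⊤ := by
  have hsum : (∑' n : ℕ,
      ((if m = s (n + 1) then (1:ℝ≥0∞) else 0) + (if m = t (n + 1) then 1 else 0)))
      = ∑ n ∈ Finset.range (m.toNat ⊔ (-m).toNat),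
      ((if m = s (n + 1) then (1:ℝ≥0∞) else 0) + (if m = t (n + 1) then 1 else 0)) := by
    apply tsum_eq_sum
    intro b hb
    simp only [Finset.mem_range, lt_sup_iff, not_or, not_lt] at hb
    have h1 : m ≠ s (b + 1) := by
      intro h
      have := hs (b + 1) (by omega)
      omega
    have h2 : m ≠ t (b + 1) := by
      intro h
      have := ht (b + 1) (by omega)
      omega
    simp [h1, h2]
  unfold Fval
  rw [hsum]
  apply ENNReal.add_ne_top.2
  constructor
  · split <;> simp
  · refine (ENNReal.sum_lt_top.2 ?_).ne
    intro a _
    apply ENNReal.add_lt_top.2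
    constructor <;> (split <;> simp)

lemma mono_right (P : Measure ℤ) (h : ∀ n : ℤ, 0 ≤ n → P {n + 1} ≤ P {n}) :
    ∀ a b : ℤ, 0 ≤ a → a ≤ b → P {b} ≤ P {a} := by
  intro a b ha hab
  exact Int.leInduction (m := a) (motive := fun b _ => P {b} ≤ P {a}) (le_refl _) (fun n hn ih => (h n (ha.trans hn)).trans ih) b hab

lemma mono_left (P : Measure ℤ) (h : ∀ n : ℤ, n ≤ 0 → P {n - 1} ≤ P {n}) :
    ∀ a b : ℤ, b ≤ 0 → a ≤ b → P {a} ≤ P {b} := by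
  intro a b hb hab
  exact Int.leInductionDown (m := b) (motive := fun a _ => P {a} ≤ P {b}) (le_refl _) (fun n hn ih => (h n (hn.trans hb)).trans ih) a hab

lemma total_mass (P : Measure ℤ) [IsProbabilityMeasure P] :
    P {0} + ∑' n : ℕ, (P {(n : ℤ) + 1} + P {-((n : ℤ) + 1)}) = 1 := by
  have h1 : HasSum (fun n : ℕ => P {((n : ℤ) + 1)}) (∑' n : ℕ, P {((n : ℤ) + 1)}) :=
    ENNReal.summable.hasSum
  have h2 : HasSum (fun n : ℕ => P {(-((n : ℤ) + 1))}) (∑' n : ℕ, P {(-((n : ℤ) + 1))}) :=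
    ENNReal.summable.hasSum
  have h3 : HasSum (fun m : ℤ => P {m})
      ((∑' n : ℕ, P {((n : ℤ) + 1)}) + P {(0:ℤ)} + ∑' n : ℕ, P {(-((n : ℤ) + 1))}) :=
    HasSum.of_add_one_of_neg_add_one h1 h2
  have h4 : ∑' m : ℤ, P {m} = 1 := by
    have huniv : (⋃ m : ℤ, ({m} : Set ℤ)) = Set.univ := Set.iUnion_of_singleton ℤ
    rw [← measure_iUnion (fun i j hij => by simp [Function.onFun, hij])
      (fun m => measurableSet_singleton m), huniv, measure_univ]
  rw [h3.tsum_eq] at h4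
  rw [ENNReal.tsum_add, ← h4]
  ring

/-- Let `P` be a measure on `ℤ` such that `∑ₙ E(n) f_P(n) ≤ 1` for every
e-value `E` for `𝒟₀`. Let `s, t : ℤ≥1 → ℤ` satisfy `s(n) ≥ n` and `t(n) ≤ −n` for all
`n ≥ 1`, and let `u ∈ ℤ`. Then `f_P(u) + ∑_{n=1}^∞ (f_P(s(n)) + f_P(t(n))) ≤ 1`. -/
theorem stmt17 (P : Measure ℤ)
    (hP : ∀ E : ℤ → NNReal, IsEValueD0 E → ∑' n : ℤ, (E n : ℝ≥0∞) * P {n} ≤ 1)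
    (s t : ℕ → ℤ) (hs : ∀ n : ℕ, 1 ≤ n → (n : ℤ) ≤ s n)
    (ht : ∀ n : ℕ, 1 ≤ n → t n ≤ -(n : ℤ)) (u : ℤ) :
    P {u} + ∑' n : ℕ, (P {s (n + 1)} + P {t (n + 1)}) ≤ 1 := by
  set E : ℤ → NNReal := fun m => (Fval s t u m).toNNReal with hE
  have hcoe : ∀ m, (E m : ℝ≥0∞) = Fval s t u m := fun m =>
    ENNReal.coe_toNNReal (Fval_ne_top s t u hs ht m)
  have hEval : IsEValueD0 E := by
    intro Q hQ
    obtain ⟨hprob, hleft, hright⟩ := hQ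
    haveI := hprob
    calc ∑' m : ℤ, (E m : ℝ≥0∞) * Q {m}
        = ∑' m : ℤ, Fval s t u m * Q {m} := by simp_rw [hcoe]
      _ = Q {u} + ∑' n : ℕ, (Q {s (n + 1)} + Q {t (n + 1)}) := Fval_key s t u (fun m => Q {m})
      _ ≤ Q {0} + ∑' n : ℕ, (Q {(n : ℤ) + 1} + Q {-((n : ℤ) + 1)}) := by
          apply add_le_add
          · rcases le_total 0 u with h | h
            · exact mono_right Q hright 0 u le_rfl h
            · exact mono_left Q hleft u 0 le_rfl h
          · apply ENNReal.tsum_le_tsum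
            intro n
            apply add_le_add
            · have h1 : ((n : ℤ) + 1) ≤ s (n + 1) := by
                have := hs (n + 1) (by omega); push_cast at this; omega
              exact mono_right Q hright ((n : ℤ) + 1) (s (n + 1)) (by omega) h1
            · have h2 : t (n + 1) ≤ -((n : ℤ) + 1) := by
                have := ht (n + 1) (by omega); push_cast at this; omega
              exact mono_left Q hleft (t (n + 1)) (-((n : ℤ) + 1)) (by omega) h2
      _ = 1 := total_mass Q
  have hfin := hP E hEval
  calc P {u} + ∑' n : ℕ, (P {s (n + 1)} + P {t (n + 1)})
      = ∑' m : ℤ, Fval s t u m * P {m} := (Fval_key s t u (fun m => P {m})).symm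
    _ = ∑' m : ℤ, (E m : ℝ≥0∞) * P {m} := by simp_rw [hcoe]
    _ ≤ 1 := hfin
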